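/- Let Γ be a finitely generated group that is virtually ℤ (i.e., contains ℤ as a subgroup of finite index) and let G be a Cayley graph of Γ with respect to a finite symmetric generating set. Let (G, c1) and (G, c2) be two connected networks with strictly positive conductance functions such that sup_{e∈E} c2(e) < ∞. Then almost surely, for every p ∈ [0,1) simultaneously, the disordered random network (G, c1, c2, p) is recurrent; in particular, for biased conductances there is no non-trivial recurrence/transience phase transition on G, i.e. p_c* = 1. -/

import Mathlib

open MeasureTheory ProbabilityTheory Filter
open scoped ENNReal Classical

noncomputable section

/-- The uniform distribution on `[0,1]`. -/
def unif01 : Measure ℝ := volume.restrict (Set.Icc 0 1)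

variable {V : Type*}

/-- The conductances of the disordered random network `(G, c1, c2, p)` determined by percolation
labels `lbl` (an edge `{x,y}` is `p`-open iff `lbl s(x,y) ≤ p`): open edges get conductance `c1`,
closed edges get `c2`. -/
def dCond (c1 c2 : V → V → ℝ) (lbl : Sym2 V → ℝ) (p : ℝ) : V → V → ℝ :=
  fun x y => if lbl s(x, y) ≤ p then c1 x y else c2 x y

/-- The biased conductance `C_λ(e) = λ^{-|e|}` on the graph `G` rooted at `o`, where
`|e| = min(dist(o,x), dist(o,y))` for an edge `e = {x,y}`; zero off edges. -/
def biasedCond (G : SimpleGraph V) (o : V) (lam : ℝ) : V → V → ℝ :=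
  fun x y => if G.Adj x y then lam ^ (-(min (G.dist o x) (G.dist o y) : ℤ)) else 0

/-- `θ` is a unit flow on the graph `G` from the vertex `a` to infinity: it is antisymmetric,
supported on edges, has zero divergence away from `a` and divergence `1` at `a`. -/
structure IsUnitFlowTo (G : SimpleGraph V) (θ : V → V → ℝ) (a : V) : Prop where
  antisymm : ∀ x y, θ x y = - θ y x
  support : ∀ x y, ¬ G.Adj x y → θ x y = 0
  div_zero : ∀ x, x ≠ a → ∑ᶠ y, θ x y = 0
  unit : ∑ᶠ y, θ a y = 1

/-- The energy `∑_e θ(e)² / c(e)` of the antisymmetric function `θ` with respect to the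
conductances `c` (valued in `ℝ≥0∞`; each undirected edge is counted twice, which does not affect
finiteness; a nonzero flow through a zero-conductance edge yields infinite energy). -/
def flowEnergy (c : V → V → ℝ) (θ : V → V → ℝ) : ℝ≥0∞ :=
  ∑' q : V × V, ENNReal.ofReal ((θ q.1 q.2) ^ 2) / ENNReal.ofReal (c q.1 q.2)

/-- The network `(G, c)` is transient at the vertex `a` if `a` admits a unit flow to infinity of
finite energy. -/
def TransientAt (G : SimpleGraph V) (c : V → V → ℝ) (a : V) : Prop :=
  ∃ θ : V → V → ℝ, IsUnitFlowTo G θ a ∧ flowEnergy c θ ≠ ⊤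

/-- The network `(G, c)` is transient: some vertex admits a unit flow to infinity of finite
energy. -/
def NetTransient (G : SimpleGraph V) (c : V → V → ℝ) : Prop :=
  ∃ a : V, TransientAt G c a

/-- The network `(G, c)` is recurrent: no vertex admits a unit flow to infinity of finite energy
(equivalently, every connected component of the subgraph spanned by positive-conductance edges is
recurrent). -/
def NetRecurrent (G : SimpleGraph V) (c : V → V → ℝ) : Prop :=
  ∀ a : V, ¬ TransientAt G c a

/-- The subgraph of `p`-open edges of `G` under percolation labels `lbl`. -/
def openSub (G : SimpleGraph V) (lbl : Sym2 V → ℝ) (p : ℝ) : SimpleGraph V where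
  Adj x y := G.Adj x y ∧ lbl s(x, y) ≤ p
  symm := by
    constructor
    intro x y h
    exact ⟨h.1.symm, by rw [Sym2.eq_swap]; exact h.2⟩
  loopless := ⟨fun x h => G.loopless.irrefl x h.1⟩

/-- There is an infinite open cluster in Bernoulli-`p` bond percolation on `G` with labels
`lbl`. -/
def HasInfCluster (G : SimpleGraph V) (lbl : Sym2 V → ℝ) (p : ℝ) : Prop :=
  ∃ x : V, {y : V | (openSub G lbl p).Reachable x y}.Infinite

/-- The family `U` of edge labels is an i.i.d. family of uniform-`[0,1]` random variables on the
probability space `(Ω, P)` (the grand coupling of Bernoulli bond percolation). -/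
def IsGrandCoupling {ι : Type*} {Ω : Type*} [MeasurableSpace Ω] (P : Measure Ω)
    (U : ι → Ω → ℝ) : Prop :=
  (∀ e, Measurable (U e)) ∧ iIndepFun U P ∧
    ∀ e, P.map (U e) = unif01

/-- The critical probability of Bernoulli bond percolation on `G`, realized through the grand
coupling `(P, U)`: the supremum of those `p ∈ [0,1]` for which almost surely there is no infinite
open cluster. -/
def percolationPc (G : SimpleGraph V) {Ω : Type*} [MeasurableSpace Ω] (P : Measure Ω)
    (U : Sym2 V → Ω → ℝ) : ℝ :=
  sSup {p : ℝ | p ∈ Set.Icc (0 : ℝ) 1 ∧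
    ∀ᵐ a ∂P, ¬ HasInfCluster G (fun e => U e a) p}

/-- The graph `G`, rooted at `o`, has (volume) growth rate `g`:
`|B_n(o)|^{1/n} → g` where `B_n(o)` is the ball of radius `n` around `o`. -/
def HasGrowthRate (G : SimpleGraph V) (o : V) (g : ℝ) : Prop :=
  Tendsto (fun n : ℕ => (({y : V | G.dist o y ≤ n}.ncard : ℝ)) ^ ((n : ℝ)⁻¹)) atTop (nhds g)

/-- `G` is quasi-transitive: its automorphism group has finitely many orbits on vertices. -/
def QuasiTransitive (G : SimpleGraph V) : Prop :=
  ∃ s : Finset V, ∀ x : V, ∃ y ∈ s, ∃ φ : G ≃g G, φ y = x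


/-- Cayley graphs are connected when `S` generates. -/
lemma cayley_reachable_one {Γ : Type*} [Group Γ] (S : Finset Γ) (G : SimpleGraph Γ)
    (hAdj : ∀ x y : Γ, G.Adj x y ↔ x⁻¹ * y ∈ S)
    (hgen : Subgroup.closure (S : Set Γ) = ⊤) : ∀ g : Γ, G.Reachable 1 g := by
  have hmap : ∀ (a x y : Γ), G.Reachable x y → G.Reachable (a * x) (a * y) := by
    intro a x y h
    exact h.map ⟨fun z => a * z, by
      intro u v huv
      rw [hAdj] at huv ⊢
      simpa [mul_assoc] using huv⟩
  intro g
  have hg : g ∈ Subgroup.closure (S : Set Γ) := by rw [hgen]; trivial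
  induction hg using Subgroup.closure_induction with
  | mem x hx =>
      exact SimpleGraph.Adj.reachable ((hAdj 1 x).2 (by simpa using hx))
  | one => exact SimpleGraph.Reachable.refl 1
  | mul x y hx hy ihx ihy =>
      refine ihx.trans ?_
      simpa using hmap x 1 y ihy
  | inv x hx ihx =>
      have := hmap x⁻¹ 1 x ihx
      simpa using this.symm

lemma tsum_eq_top_of_infinite_finsets {α : Type*} (g : α → ℝ≥0∞) (F : ℕ → Finset α)
    (I : Set ℕ) (hI : I.Infinite)
    (hdisj : ∀ m n, m ≠ n → Disjoint (F m) (F n)) {δ : ℝ≥0∞} (hδ : δ ≠ 0)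
    (h : ∀ n ∈ I, δ ≤ ∑ q ∈ F n, g q) : ∑' q, g q = ⊤ := by
  have hle : ∀ N : ℕ, (N : ℝ≥0∞) * δ ≤ ∑' q, g q := by
    intro N
    obtain ⟨J, hJI, hJcard⟩ := hI.exists_subset_card_eq N
    have hdisjJ : (↑J : Set ℕ).Pairwise (Function.onFun Disjoint F) := by
      intro m _ n _ hmn
      exact hdisj m n hmn
    calc (N : ℝ≥0∞) * δ = ∑ _n ∈ J, δ := by
          rw [Finset.sum_const, hJcard, nsmul_eq_mul]
      _ ≤ ∑ n ∈ J, ∑ q ∈ F n, g q := Finset.sum_le_sum fun n hn => h n (hJI hn)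
      _ = ∑ q ∈ J.biUnion F, g q := (Finset.sum_biUnion hdisjJ).symm
      _ ≤ ∑' q, g q := ENNReal.sum_le_tsum _
  by_contra htop
  rcases eq_or_ne δ ⊤ with hδtop | hδtop
  · have := hle 1
    simp [hδtop] at this
    exact htop (by simpa using this)
  · obtain ⟨N, hN⟩ := ENNReal.exists_nat_gt (ENNReal.div_lt_top htop hδ).ne
    have : (∑' q, g q) < (N : ℝ≥0∞) * δ := by
      rwa [← ENNReal.div_lt_iff (Or.inl hδ) (Or.inl hδtop)]
    exact absurd (hle N) (by simpa using this.not_ge)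

lemma ball_bound {Γ : Type*} [Group Γ] (Z : Subgroup Γ) (e : Z ≃* Multiplicative ℤ)
    (hZfin : Z.FiniteIndex) (S : Finset Γ) (G : SimpleGraph Γ)
    (hAdj : ∀ x y : Γ, G.Adj x y ↔ x⁻¹ * y ∈ S)
    (hreach : ∀ g : Γ, G.Reachable 1 g) :
    ∃ C : ℕ, 0 < C ∧ ∀ n : ℕ, ∃ F : Finset Γ,
      {g : Γ | G.dist 1 g ≤ n} ⊆ ↑F ∧ F.card ≤ C * (n + 1) := by
  classical
  haveI := hZfin
  haveI : Finite (Γ ⧸ Z) := Z.finite_quotient_of_finiteIndex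
  haveI := Fintype.ofFinite (Γ ⧸ Z)
  set rep : Γ → Γ := fun g => ((QuotientGroup.mk g⁻¹ : Γ ⧸ Z).out)⁻¹ with hrepdef
  have hmem : ∀ g : Γ, g * (rep g)⁻¹ ∈ Z := by
    intro g
    have h1 : (QuotientGroup.mk ((QuotientGroup.mk g⁻¹ : Γ ⧸ Z).out) : Γ ⧸ Z)
        = QuotientGroup.mk g⁻¹ := QuotientGroup.out_eq' _
    have h2 : ((QuotientGroup.mk g⁻¹ : Γ ⧸ Z).out)⁻¹ * g⁻¹ ∈ Z := QuotientGroup.eq.mp h1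
    have h3 := Z.inv_mem h2
    simpa [hrepdef, mul_inv_rev] using h3
  set RS : Finset Γ := Finset.univ.image (fun q : Γ ⧸ Z => (Quotient.out q)⁻¹) with hRSdef
  have hrepRS : ∀ g, rep g ∈ RS := by
    intro g
    exact Finset.mem_image.mpr ⟨QuotientGroup.mk g⁻¹, Finset.mem_univ _, rfl⟩
  set RS' : Finset Γ := insert 1 RS with hRS'def
  set S' : Finset Γ := insert 1 S with hS'def
  set T : Finset ℕ := (RS' ×ˢ S' ×ˢ RS).image (fun p =>
    if h : p.1 * p.2.1 * p.2.2⁻¹ ∈ Z then (Multiplicative.toAdd (e ⟨_, h⟩)).natAbs else 0)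
    with hTdef
  set M : ℕ := T.sup id with hMdef
  set κ : Γ → ℤ := fun g => Multiplicative.toAdd (e ⟨g * (rep g)⁻¹, hmem g⟩) with hκdef
  have hT : ∀ (a s b : Γ), a ∈ RS' → s ∈ S' → b ∈ RS → ∀ (h : a * s * b⁻¹ ∈ Z),
      (Multiplicative.toAdd (e ⟨a * s * b⁻¹, h⟩)).natAbs ≤ M := by
    intro a s b ha hs hb h
    have hmem' : ((a, s, b) : Γ × Γ × Γ) ∈ RS' ×ˢ S' ×ˢ RS := by
      simp [Finset.mem_product, ha, hs, hb]
    have : (if h : a * s * b⁻¹ ∈ Z then (Multiplicative.toAdd (e ⟨_, h⟩)).natAbs else 0) ∈ T :=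
      Finset.mem_image.mpr ⟨(a, s, b), hmem', rfl⟩
    rw [dif_pos h] at this
    exact Finset.le_sup (f := id) this
  have hstep : ∀ x y : Γ, G.Adj x y → (κ y - κ x).natAbs ≤ M := by
    intro x y hxy
    have hs : x⁻¹ * y ∈ S := (hAdj x y).1 hxy
    have hz : rep x * (x⁻¹ * y) * (rep y)⁻¹ ∈ Z := by
      have := Z.mul_mem (Z.inv_mem (hmem x)) (hmem y)
      have heq : (x * (rep x)⁻¹)⁻¹ * (y * (rep y)⁻¹) = rep x * (x⁻¹ * y) * (rep y)⁻¹ := by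
        group
      rwa [heq] at this
    have hsub : (⟨x * (rep x)⁻¹, hmem x⟩ : Z)⁻¹ * ⟨y * (rep y)⁻¹, hmem y⟩
        = ⟨rep x * (x⁻¹ * y) * (rep y)⁻¹, hz⟩ := by
      ext
      push_cast
      group
    have hκeq : κ y - κ x = Multiplicative.toAdd (e ⟨rep x * (x⁻¹ * y) * (rep y)⁻¹, hz⟩) := by
      rw [← hsub, map_mul, map_inv]
      simp [hκdef, sub_eq_neg_add]
    rw [hκeq]
    exact hT _ _ _ (Finset.mem_insert_of_mem (hrepRS x)) (Finset.mem_insert_of_mem hs)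
      (hrepRS y) hz
  have hbase : (κ 1).natAbs ≤ M := by
    have hz : (1 : Γ) * 1 * (rep 1)⁻¹ ∈ Z := by simpa using hmem 1
    have : (⟨(1 : Γ) * (rep 1)⁻¹, hmem 1⟩ : Z) = ⟨(1 : Γ) * 1 * (rep 1)⁻¹, hz⟩ := by
      ext; simp
    have hκ1 : κ 1 = Multiplicative.toAdd (e ⟨(1 : Γ) * 1 * (rep 1)⁻¹, hz⟩) := by
      show Multiplicative.toAdd (e ⟨(1 : Γ) * (rep 1)⁻¹, hmem 1⟩) = _
      rw [this]
    rw [hκ1]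
    exact hT _ _ _ (Finset.mem_insert_self _ _) (Finset.mem_insert_self _ _) (hrepRS 1) hz
  have hwalk : ∀ (x g : Γ) (w : G.Walk x g), (κ g - κ x).natAbs ≤ M * w.length := by
    intro x g w
    induction w with
    | nil => simp
    | @cons u v g' huv w ih =>
        have h1 : (κ v - κ u).natAbs ≤ M := hstep u v huv
        have h2 := Int.natAbs_add_le (κ g' - κ v) (κ v - κ u)
        have h3 : κ g' - κ u = (κ g' - κ v) + (κ v - κ u) := by ring
        rw [SimpleGraph.Walk.length_cons]
        calc (κ g' - κ u).natAbs ≤ (κ g' - κ v).natAbs + (κ v - κ u).natAbs := by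
              rw [h3]; exact h2
          _ ≤ M * w.length + M := add_le_add ih h1
          _ = M * (w.length + 1) := by ring
  have hκbound : ∀ (g : Γ) (n : ℕ), G.dist 1 g ≤ n → (κ g).natAbs ≤ M * (n + 1) := by
    intro g n hg
    obtain ⟨w, hw⟩ := (hreach g).exists_walk_length_eq_dist
    have h1 : (κ g - κ 1).natAbs ≤ M * n := by
      calc (κ g - κ 1).natAbs ≤ M * w.length := hwalk 1 g w
        _ ≤ M * n := by
            apply Nat.mul_le_mul_left
            omega
    have h5 := Int.natAbs_add_le (κ g - κ 1) (κ 1)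
    rw [sub_add_cancel] at h5
    calc (κ g).natAbs ≤ (κ g - κ 1).natAbs + (κ 1).natAbs := h5
      _ ≤ M * n + M := add_le_add h1 hbase
      _ ≤ M * (n + 1) := by rw [Nat.mul_succ]
  refine ⟨RS.card * (2 * M + 1), ?_, ?_⟩
  · have : RS.Nonempty := ⟨rep 1, hrepRS 1⟩
    have := Finset.card_pos.mpr this
    positivity
  intro n
  set L : ℕ := M * (n + 1) with hLdef
  refine ⟨(RS ×ˢ Finset.Icc (-(L : ℤ)) ((L : ℤ))).image
    (fun p => ((e.symm (Multiplicative.ofAdd p.2) : Z) : Γ) * p.1), ?_, ?_⟩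
  · intro g hg
    simp only [Set.mem_setOf_eq] at hg
    have hb := hκbound g n hg
    refine Finset.mem_coe.mpr (Finset.mem_image.mpr ⟨(rep g, κ g), ?_, ?_⟩)
    · refine Finset.mem_product.mpr ⟨hrepRS g, Finset.mem_Icc.mpr ⟨?_, ?_⟩⟩ <;> omega
    · show ((e.symm (Multiplicative.ofAdd (κ g)) : Z) : Γ) * rep g = g
      have : e.symm (Multiplicative.ofAdd (κ g)) = ⟨g * (rep g)⁻¹, hmem g⟩ := by
        rw [hκdef]
        simp
      rw [this]
      simp
  · calc _ ≤ (RS ×ˢ Finset.Icc (-(L : ℤ)) ((L : ℤ))).card :=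
        Finset.card_image_le
      _ = RS.card * (Finset.Icc (-(L : ℤ)) ((L : ℤ))).card := by
        rw [Finset.card_product]
      _ ≤ RS.card * ((2 * M + 1) * (n + 1)) := by
        apply Nat.mul_le_mul_left
        rw [Int.card_Icc]
        have h1 : ((L : ℤ) + 1 - (-(L : ℤ))) = ((2 * L + 1 : ℕ) : ℤ) := by push_cast; ring
        rw [h1, Int.toNat_natCast, hLdef]
        have h2 : 1 ≤ n + 1 := Nat.succ_le_succ (Nat.zero_le n)
        nlinarith
      _ = RS.card * (2 * M + 1) * (n + 1) := by ring


lemma unbounded_infinite {Q : Set ℕ} (h : ∀ m : ℕ, ∃ n, m ≤ n ∧ n ∈ Q) : Q.Infinite := by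
  intro hfin
  obtain ⟨b, hb⟩ := hfin.bddAbove
  obtain ⟨n, hn, hnQ⟩ := h (b + 1)
  exact absurd (hb hnQ) (by omega)


lemma percolation_closed_cutsets {Γ : Type*} {Ω : Type*} [MeasurableSpace Ω]
    (P : Measure Ω) [IsProbabilityMeasure P]
    (U : Sym2 Γ → Ω → ℝ) (hUmeas : ∀ e, Measurable (U e))
    (hUindep : iIndepFun U P)
    (hUdist : ∀ e, P.map (U e) = unif01)
    (EF : ℕ → Finset (Sym2 Γ)) (K : ℕ) (Good : Set ℕ) (hGoodInf : Good.Infinite)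
    (hEcard : ∀ n ∈ Good, (EF n).card ≤ K)
    (hEdisj : ∀ m n, m ≠ n → Disjoint (EF m) (EF n))
    (r : ℝ) (hr0 : 0 ≤ r) (hr1 : r < 1) :
    ∀ᵐ a ∂P, {n | n ∈ Good ∧ ∀ ed ∈ EF n, r < U ed a}.Infinite := by
  classical
  set B : Sym2 Γ → Set Ω := fun ed => U ed ⁻¹' (Set.Ioi r) with hBdef
  have hBmeas : ∀ ed, MeasurableSet (B ed) := fun ed => (hUmeas ed) measurableSet_Ioi
  have hBprob : ∀ ed, P (B ed) = ENNReal.ofReal (1 - r) := by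
    intro ed
    have h1 : P (B ed) = (P.map (U ed)) (Set.Ioi r) := by
      rw [Measure.map_apply (hUmeas ed) measurableSet_Ioi]
    rw [h1, hUdist ed]
    have h2 : Set.Ioi r ∩ Set.Icc (0:ℝ) 1 = Set.Ioc r 1 := by
      ext x
      simp only [Set.mem_inter_iff, Set.mem_Ioi, Set.mem_Icc, Set.mem_Ioc]
      constructor
      · rintro ⟨hx, -, h1'⟩; exact ⟨hx, h1'⟩
      · rintro ⟨hx, h1'⟩; exact ⟨hx, le_trans hr0 hx.le, h1'⟩
    rw [unif01, Measure.restrict_apply measurableSet_Ioi, h2, Real.volume_Ioc]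
  have hprodE : ∀ E : Finset (Sym2 Γ), P (⋂ ed ∈ E, B ed) = ∏ ed ∈ E, P (B ed) := by
    intro E
    exact hUindep.meas_biInter (fun ed _ => ⟨Set.Ioi r, measurableSet_Ioi, rfl⟩)
  set p : ℕ → Prop := fun n => n ∈ Good with hpdef
  have hp : (setOf p).Infinite := hGoodInf
  set φ : ℕ → ℕ := Nat.nth p with hφdef
  have hφinj : Function.Injective φ := Nat.nth_injective hp
  have hφmem : ∀ k, φ k ∈ Good := fun k => Nat.nth_mem_of_infinite hp k
  set A : ℕ → Set Ω := fun k => ⋂ ed ∈ EF (φ k), B ed with hAdef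
  have hAmeas : ∀ k, MeasurableSet (A k) :=
    fun k => Finset.measurableSet_biInter _ (fun ed _ => hBmeas ed)
  have hAprob : ∀ k, P (A k) = ENNReal.ofReal (1 - r) ^ (EF (φ k)).card := by
    intro k
    rw [hAdef]
    simp only
    rw [hprodE]
    rw [Finset.prod_congr rfl (fun ed _ => hBprob ed), Finset.prod_const]
  have hindep : iIndepSet A P := by
    rw [iIndepSet_iff_iIndepSets_singleton hAmeas, iIndepSets_singleton_iff]
    intro J
    have hJdisj : (↑J : Set ℕ).Pairwise (Function.onFun Disjoint (fun k => EF (φ k))) := by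
      intro m _ n _ hmn
      exact hEdisj (φ m) (φ n) (fun h => hmn (hφinj h))
    have hset : (⋂ k ∈ J, A k) = ⋂ ed ∈ J.biUnion (fun k => EF (φ k)), B ed := by
      rw [Finset.set_biInter_biUnion]
    rw [hset, hprodE, Finset.prod_biUnion hJdisj]
    apply Finset.prod_congr rfl
    intro k _
    rw [hAprob k, Finset.prod_congr rfl (fun ed _ => hBprob ed), Finset.prod_const]
  set δ : ℝ≥0∞ := ENNReal.ofReal (1 - r) ^ K with hδdef
  have hbase0 : ENNReal.ofReal (1 - r) ≠ 0 := by
    simp only [ne_eq, ENNReal.ofReal_eq_zero, not_le]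
    linarith
  have hbase1 : ENNReal.ofReal (1 - r) ≤ 1 := by
    rw [show (1 : ℝ≥0∞) = ENNReal.ofReal 1 by simp]
    exact ENNReal.ofReal_le_ofReal (by linarith)
  have hδ0 : δ ≠ 0 := pow_ne_zero _ hbase0
  have hδle : ∀ k, δ ≤ P (A k) := by
    intro k
    rw [hAprob k, hδdef]
    exact pow_le_pow_of_le_one (by positivity) hbase1 (hEcard _ (hφmem k))
  have hsum : (∑' k, P (A k)) = ⊤ := by
    apply tsum_eq_top_of_infinite_finsets (fun k => P (A k)) (fun k => {k}) Set.univ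
      Set.infinite_univ (fun m n hmn => Finset.disjoint_singleton.mpr hmn) hδ0
    intro n _
    simpa using hδle n
  have hBC := measure_limsup_eq_one hAmeas hindep hsum
  have hae : ∀ᵐ a ∂P, a ∈ limsup A atTop := by
    rw [ae_iff]
    have hms : MeasurableSet (limsup A atTop) := by
      rw [limsup_eq_iInf_iSup_of_nat]
      exact MeasurableSet.iInter fun n => MeasurableSet.iUnion fun i =>
        MeasurableSet.iUnion fun _ => hAmeas i
    have : {a | ¬ a ∈ limsup A atTop} = (limsup A atTop)ᶜ := rfl
    rw [this]
    rw [measure_compl hms (measure_ne_top P _), hBC]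
    simp
  filter_upwards [hae] with a ha
  rw [mem_limsup_iff_frequently_mem] at ha
  have hKinf : {k : ℕ | a ∈ A k}.Infinite := by
    apply unbounded_infinite
    intro m
    rw [frequently_atTop] at ha
    obtain ⟨n, hn, hna⟩ := ha m
    exact ⟨n, hn, hna⟩
  have himg : ((fun k => φ k) '' {k : ℕ | a ∈ A k}).Infinite :=
    hKinf.image (hφinj.injOn)
  apply himg.mono
  rintro n ⟨k, hk, rfl⟩
  refine ⟨hφmem k, ?_⟩
  intro ed hed
  have := hk
  rw [hAdef] at this
  simp only [Set.mem_iInter] at this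
  exact this ed hed


lemma geometry {Γ : Type*} [Group Γ] (S : Finset Γ) (hS : S.Nonempty) (G : SimpleGraph Γ)
    (hAdj : ∀ x y : Γ, G.Adj x y ↔ x⁻¹ * y ∈ S)
    (hreach : ∀ g : Γ, G.Reachable 1 g) (C : ℕ) (hC : 0 < C)
    (hball : ∀ n : ℕ, ∃ F : Finset Γ, {g : Γ | G.dist 1 g ≤ n} ⊆ ↑F ∧ F.card ≤ C * (n + 1)) :
    ∃ (K : ℕ) (DF : ℕ → Finset (Γ × Γ)) (Good : Set ℕ),
      0 < K ∧ Good.Infinite ∧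
      (∀ n ∈ Good, (DF n).card ≤ K) ∧
      (∀ n, ∀ q ∈ DF n, G.Adj q.1 q.2 ∧ G.dist 1 q.1 = n ∧ G.dist 1 q.2 = n + 1) ∧
      (∀ m n, m ≠ n → Disjoint (DF m) (DF n)) ∧
      (∀ m n, m ≠ n → Disjoint ((DF m).image (fun q => s(q.1, q.2)))
        ((DF n).image (fun q => s(q.1, q.2)))) ∧
      (∀ (v : Γ) (θ : Γ → Γ → ℝ), IsUnitFlowTo G θ v → ∀ n, G.dist 1 v ≤ n →
        ∑ q ∈ DF n, θ q.1 q.2 = 1) := by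
  classical
  have hconn : G.Connected := by
    refine ⟨fun x y => (hreach x).symm.trans (hreach y)⟩
  have hadj_dist : ∀ x y : Γ, G.Adj x y → G.dist 1 y ≤ G.dist 1 x + 1 := by
    intro x y h
    have h1 : G.dist x y ≤ 1 := by
      have := SimpleGraph.dist_le (SimpleGraph.Walk.cons h SimpleGraph.Walk.nil)
      simpa using this
    calc G.dist 1 y ≤ G.dist 1 x + G.dist x y := hconn.dist_triangle
      _ ≤ G.dist 1 x + 1 := by omega
  have hBfin : ∀ n : ℕ, {g : Γ | G.dist 1 g ≤ n}.Finite := by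
    intro n
    obtain ⟨F, hF, _⟩ := hball n
    exact Set.Finite.subset F.finite_toSet hF
  set BF : ℕ → Finset Γ := fun n => (hBfin n).toFinset with hBFdef
  have hmemBF : ∀ n g, g ∈ BF n ↔ G.dist 1 g ≤ n := by
    intro n g
    simp [hBFdef, Set.Finite.mem_toFinset]
  have hBFcard : ∀ n, (BF n).card ≤ C * (n + 1) := by
    intro n
    obtain ⟨F, hF, hFc⟩ := hball n
    refine le_trans (Finset.card_le_card ?_) hFc
    intro g hg
    exact hF ((hmemBF n g).mp hg)
  have hBFmono : ∀ n, BF n ⊆ BF (n + 1) := by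
    intro n g hg
    rw [hmemBF] at hg ⊢
    omega
  set SF : ℕ → Finset Γ := fun n => (BF n).filter (fun g => G.dist 1 g = n) with hSFdef
  have hmemSF : ∀ n g, g ∈ SF n ↔ G.dist 1 g = n := by
    intro n g
    simp only [hSFdef, Finset.mem_filter, hmemBF]
    constructor
    · exact fun h => h.2
    · intro h; exact ⟨le_of_eq h, h⟩
  -- Good spheres
  set Good : Set ℕ := {n | (SF n).card ≤ 2 * C} with hGooddef
  have hfreq : ∀ m : ℕ, ∃ n, m ≤ n ∧ n ∈ Good := by
    intro m
    by_contra hcon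
    push_neg at hcon
    have hbig : ∀ k, m ≤ k → 2 * C + 1 ≤ (SF k).card := by
      intro k hk
      have := hcon k hk
      simp only [hGooddef, Set.mem_setOf_eq, not_le] at this
      omega
    have hgrow : ∀ j : ℕ, (j + 1) * (2 * C + 1) ≤ (BF (m + j)).card := by
      intro j
      induction j with
      | zero =>
          have h1 : SF m ⊆ BF m := by
            intro g hg
            rw [hmemBF]
            exact le_of_eq ((hmemSF m g).mp hg)
          have := Finset.card_le_card h1
          have := hbig m le_rfl
          simpa using le_trans (hbig m le_rfl) (Finset.card_le_card h1)
      | succ j ih =>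
          have hsub : BF (m + j) ∪ SF (m + j + 1) ⊆ BF (m + j + 1) := by
            apply Finset.union_subset
            · exact hBFmono (m + j)
            · intro g hg
              rw [hmemBF]
              exact le_of_eq ((hmemSF _ g).mp hg)
          have hdisj : Disjoint (BF (m + j)) (SF (m + j + 1)) := by
            rw [Finset.disjoint_left]
            intro g hg1 hg2
            rw [hmemBF] at hg1
            rw [hmemSF] at hg2
            omega
          have h1 : (BF (m + j)).card + (SF (m + j + 1)).card ≤ (BF (m + j + 1)).card := by
            rw [← Finset.card_union_of_disjoint hdisj]
            exact Finset.card_le_card hsub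
          have h2 := hbig (m + j + 1) (by omega)
          calc (j + 1 + 1) * (2 * C + 1) = (j + 1) * (2 * C + 1) + (2 * C + 1) := by ring
            _ ≤ (BF (m + j)).card + (SF (m + j + 1)).card := add_le_add ih h2
            _ ≤ (BF (m + (j + 1))).card := by
                have : m + (j + 1) = m + j + 1 := by omega
                rw [this]; exact h1
    have hcontr := le_trans (hgrow (C * m)) (hBFcard (m + C * m))
    have key : (C * m + 1) * (2 * C + 1) = C * (m + C * m + 1) + (C * (C * m) + C + 1) := by
      ring
    rw [key] at hcontr
    omega
  have hGoodInf : Good.Infinite := by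
    intro hfin
    obtain ⟨b, hb⟩ := hfin.bddAbove
    obtain ⟨n, hn, hnG⟩ := hfreq (b + 1)
    exact absurd (hb hnG) (by omega)
  -- cutsets
  set DF : ℕ → Finset (Γ × Γ) := fun n =>
    (BF n ×ˢ BF (n + 1)).filter (fun q => G.Adj q.1 q.2 ∧ ¬ G.dist 1 q.2 ≤ n) with hDFdef
  have hmemDF : ∀ n q, q ∈ DF n ↔
      G.Adj q.1 q.2 ∧ G.dist 1 q.1 ≤ n ∧ ¬ G.dist 1 q.2 ≤ n := by
    intro n q
    simp only [hDFdef, Finset.mem_filter, Finset.mem_product, hmemBF]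
    constructor
    · rintro ⟨⟨h1, h2⟩, h3, h4⟩
      exact ⟨h3, h1, h4⟩
    · rintro ⟨h3, h1, h4⟩
      exact ⟨⟨h1, le_trans (hadj_dist _ _ h3) (by omega)⟩, h3, h4⟩
  have hDFdist : ∀ n, ∀ q ∈ DF n, G.Adj q.1 q.2 ∧ G.dist 1 q.1 = n ∧ G.dist 1 q.2 = n + 1 := by
    intro n q hq
    rw [hmemDF] at hq
    obtain ⟨h1, h2, h3⟩ := hq
    have h4 := hadj_dist q.1 q.2 h1
    exact ⟨h1, by omega, by omega⟩
  have hDFcard : ∀ n ∈ Good, (DF n).card ≤ 2 * C * S.card := by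
    intro n hn
    have : (DF n).card ≤ (SF n ×ˢ S).card := by
      apply Finset.card_le_card_of_injOn (fun q => (q.1, q.1⁻¹ * q.2))
      · intro q hq
        obtain ⟨h1, h2, h3⟩ := hDFdist n q hq
        refine Finset.mem_product.mpr ⟨(hmemSF n q.1).mpr h2, (hAdj q.1 q.2).mp h1⟩
      · intro q1 h1 q2 h2 heq
        simp only [Prod.mk.injEq] at heq
        obtain ⟨ha, hb⟩ := heq
        have : q1.2 = q2.2 := by
          have := congrArg (fun z => q2.1 * z) hb
          simpa [ha, mul_assoc] using this
        exact Prod.ext ha this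
    calc (DF n).card ≤ (SF n ×ˢ S).card := this
      _ = (SF n).card * S.card := Finset.card_product _ _
      _ ≤ 2 * C * S.card := Nat.mul_le_mul_right _ hn
  have hDFdisj : ∀ m n : ℕ, m ≠ n → Disjoint (DF m) (DF n) := by
    intro m n hmn
    rw [Finset.disjoint_left]
    intro q hqm hqn
    obtain ⟨-, h1, -⟩ := hDFdist m q hqm
    obtain ⟨-, h2, -⟩ := hDFdist n q hqn
    omega
  refine ⟨2 * C * S.card, DF, Good, ?_, hGoodInf, hDFcard, hDFdist, hDFdisj, ?_, ?_⟩
  · have := Finset.card_pos.mpr hS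
    positivity
  · -- Sym2 disjointness
    intro m n hmn
    rw [Finset.disjoint_left]
    intro ed hedm hedn
    obtain ⟨q, hq, hqe⟩ := Finset.mem_image.mp hedm
    obtain ⟨r, hr, hre⟩ := Finset.mem_image.mp hedn
    obtain ⟨-, hq1, hq2⟩ := hDFdist m q hq
    obtain ⟨-, hr1, hr2⟩ := hDFdist n r hr
    rw [← hre] at hqe
    rw [Sym2.eq_iff] at hqe
    rcases hqe with ⟨h1, h2⟩ | ⟨h1, h2⟩
    · rw [h1] at hq1; omega
    · rw [h1] at hq1; rw [h2] at hq2; omega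
  · -- flow conservation across cutsets
    intro v θ hθ n hv
    have hsupp : ∀ x : Γ, x ∈ BF n → Function.support (θ x) ⊆ ↑(BF (n + 1)) := by
      intro x hx y hy
      rw [Function.mem_support] at hy
      by_contra hyn
      have hadj : G.Adj x y := by
        by_contra hna
        exact hy (hθ.support x y hna)
      rw [hmemBF] at hx
      have := hadj_dist x y hadj
      have : y ∈ BF (n+1) := (hmemBF _ y).mpr (by omega)
      exact hyn this
    have h1 : ∑ x ∈ BF n, ∑ᶠ y, θ x y = 1 := by
      rw [Finset.sum_eq_single_of_mem v ((hmemBF n v).mpr hv)]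
      · exact hθ.unit
      · intro x hx hxv
        exact hθ.div_zero x hxv
    have h2 : ∀ x ∈ BF n, ∑ᶠ y, θ x y = ∑ y ∈ BF (n + 1), θ x y := by
      intro x hx
      exact finsum_eq_sum_of_support_subset _ (hsupp x hx)
    rw [Finset.sum_congr rfl h2] at h1
    have h3 : ∀ x ∈ BF n, ∑ y ∈ BF (n + 1), θ x y
        = (∑ y ∈ BF n, θ x y) + ∑ y ∈ BF (n + 1) \ BF n, θ x y := by
      intro x hx
      rw [← Finset.sum_sdiff (hBFmono n)]
      ring
    rw [Finset.sum_congr rfl h3, Finset.sum_add_distrib] at h1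
    have h4 : ∑ x ∈ BF n, ∑ y ∈ BF n, θ x y = 0 := by
      have hA : ∑ x ∈ BF n, ∑ y ∈ BF n, θ x y = - ∑ x ∈ BF n, ∑ y ∈ BF n, θ x y := by
        conv_lhs => rw [Finset.sum_comm]
        rw [← Finset.sum_neg_distrib]
        apply Finset.sum_congr rfl
        intro x hx
        rw [← Finset.sum_neg_distrib]
        apply Finset.sum_congr rfl
        intro y hy
        exact hθ.antisymm y x
      linarith
    rw [h4, zero_add] at h1
    rw [← Finset.sum_product'] at h1
    rw [← h1]
    apply Finset.sum_subset
    · intro q hq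
      rw [hmemDF] at hq
      obtain ⟨ha, hb, hc⟩ := hq
      refine Finset.mem_product.mpr ⟨(hmemBF n q.1).mpr hb, Finset.mem_sdiff.mpr ⟨?_, ?_⟩⟩
      · exact (hmemBF _ q.2).mpr (le_trans (hadj_dist _ _ ha) (by omega))
      · intro hcon
        exact hc ((hmemBF n q.2).mp hcon)
    · intro q hq hqn
      rw [Finset.mem_product, Finset.mem_sdiff] at hq
      obtain ⟨hb, hc, hd⟩ := hq
      rw [hmemDF] at hqn
      push_neg at hqn
      by_contra hne
      have hadj : G.Adj q.1 q.2 := by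
        by_contra hna
        exact hne (hθ.support _ _ hna)
      exact hd ((hmemBF n q.2).mpr (hqn hadj ((hmemBF n q.1).mp hb)))
  

/-- Let `Γ` be a finitely generated group which is virtually `ℤ` (it contains a
subgroup of finite index isomorphic to `ℤ`), and let `G` be a Cayley graph of `Γ` with respect to
a finite symmetric generating set `S` (so `x ~ y` iff `x⁻¹ * y ∈ S`). Let `(G, c1)` and `(G, c2)`
be two connected networks with strictly positive conductances on edges such that
`sup_e c2(e) < ∞`. Then almost surely, for every `p ∈ [0,1)` simultaneously, the disordered
random network `(G, c1, c2, p)` is recurrent; in particular there is no non-trivial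
recurrence/transience phase transition, i.e. `p_c* = 1`. -/
theorem statement_5
    {Γ : Type*} [Group Γ]
    (Z : Subgroup Γ) (hZ : Nonempty (Z ≃* Multiplicative ℤ)) (hZfin : Z.FiniteIndex)
    (S : Finset Γ) (G : SimpleGraph Γ)
    (hAdj : ∀ x y : Γ, G.Adj x y ↔ x⁻¹ * y ∈ S)
    (hgen : Subgroup.closure (S : Set Γ) = ⊤)
    (c1 c2 : Γ → Γ → ℝ)
    (hc1symm : ∀ x y, c1 x y = c1 y x)
    (hc1pos : ∀ x y, G.Adj x y → 0 < c1 x y)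
    (hc1supp : ∀ x y, ¬ G.Adj x y → c1 x y = 0)
    (hc2symm : ∀ x y, c2 x y = c2 y x)
    (hc2pos : ∀ x y, G.Adj x y → 0 < c2 x y)
    (hc2supp : ∀ x y, ¬ G.Adj x y → c2 x y = 0)
    (c : ℝ) (hc2bdd : ∀ x y, c2 x y ≤ c)
    {Ω : Type*} [MeasurableSpace Ω] (P : Measure Ω) [IsProbabilityMeasure P]
    (U : Sym2 Γ → Ω → ℝ) (hU : IsGrandCoupling P U) :
    (∀ᵐ a ∂P, ∀ p : ℝ, 0 ≤ p → p < 1 →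
      NetRecurrent G (dCond c1 c2 (fun e => U e a) p)) ∧
    sSup {p : ℝ | p ∈ Set.Icc (0 : ℝ) 1 ∧
        ∀ᵐ a ∂P, ∀ q : ℝ, 0 ≤ q → q < p →
          NetRecurrent G (dCond c1 c2 (fun e => U e a) q)} = 1 := by
  classical
  obtain ⟨e⟩ := hZ
  obtain ⟨hUmeas, hUindep, hUdist⟩ := hU
  have hreach : ∀ g : Γ, G.Reachable 1 g := cayley_reachable_one S G hAdj hgen
  -- Γ is infinite, S is nonempty, c > 0
  have hZinf : Infinite Z := Infinite.of_injective e.symm e.symm.injective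
  have hΓinf : Infinite Γ := Infinite.of_injective (fun z : Z => (z : Γ)) Subtype.val_injective
  have hSne : S.Nonempty := by
    rcases Finset.eq_empty_or_nonempty S with h | h
    · exfalso
      rw [h, Finset.coe_empty, Subgroup.closure_empty] at hgen
      obtain ⟨a, b, hab⟩ := exists_pair_ne Γ
      have ha : a ∈ (⊥ : Subgroup Γ) := by rw [hgen]; trivial
      have hb : b ∈ (⊥ : Subgroup Γ) := by rw [hgen]; trivial
      rw [Subgroup.mem_bot] at ha hb
      exact hab (ha.trans hb.symm)
    · exact h
  obtain ⟨s₀, hs₀⟩ := hSne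
  have hadj₀ : G.Adj 1 s₀ := (hAdj 1 s₀).2 (by simpa using hs₀)
  have hcpos : 0 < c := lt_of_lt_of_le (hc2pos 1 s₀ hadj₀) (hc2bdd 1 s₀)
  -- geometry
  obtain ⟨C, hCpos, hball⟩ := ball_bound Z e hZfin S G hAdj hreach
  obtain ⟨K, DF, Good, hKpos, hGoodInf, hDFcard, hDFdist, hDFdisj, hEdisj, hcut⟩ :=
    geometry S ⟨s₀, hs₀⟩ G hAdj hreach C hCpos hball
  set EF : ℕ → Finset (Sym2 Γ) := fun n => (DF n).image (fun q => s(q.1, q.2)) with hEFdef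
  have hEcard : ∀ n ∈ Good, (EF n).card ≤ K :=
    fun n hn => le_trans Finset.card_image_le (hDFcard n hn)
  -- probability: almost surely, for each rational r < 1, infinitely many closed good cutsets
  have hAE : ∀ᵐ a ∂P, ∀ r : ℚ, 0 ≤ (r : ℝ) → (r : ℝ) < 1 →
      {n | n ∈ Good ∧ ∀ ed ∈ EF n, (r : ℝ) < U ed a}.Infinite := by
    rw [ae_all_iff]
    intro r
    by_cases h0 : 0 ≤ (r : ℝ) ∧ (r : ℝ) < 1
    · filter_upwards [percolation_closed_cutsets P U hUmeas hUindep hUdist EF K Good hGoodInf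
        hEcard hEdisj (r : ℝ) h0.1 h0.2] with a ha _ _
      exact ha
    · filter_upwards with a h1 h2
      exact absurd ⟨h1, h2⟩ h0
  have hmain : ∀ᵐ a ∂P, ∀ p : ℝ, 0 ≤ p → p < 1 →
      NetRecurrent G (dCond c1 c2 (fun e => U e a) p) := by
    filter_upwards [hAE] with a ha
    intro p hp0 hp1
    intro v htrans
    obtain ⟨θ, hθ, hfin⟩ := htrans
    apply hfin
    obtain ⟨r, hr1, hr2⟩ := exists_rat_btwn hp1
    have hr0 : (0 : ℝ) ≤ (r : ℝ) := le_of_lt (lt_of_le_of_lt hp0 hr1)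
    have hI : ({n | n ∈ Good ∧ ∀ ed ∈ EF n, (r : ℝ) < U ed a}
        \ {n | n < G.dist 1 v}).Infinite :=
      (ha r hr0 hr2).diff (Set.finite_lt_nat _)
    set cc : Γ → Γ → ℝ := dCond c1 c2 (fun ed => U ed a) p with hccdef
    set g : Γ × Γ → ℝ≥0∞ :=
      fun q => ENNReal.ofReal ((θ q.1 q.2) ^ 2) / ENNReal.ofReal (cc q.1 q.2) with hgdef
    have hδ0 : (ENNReal.ofReal (1 / K) * (ENNReal.ofReal c)⁻¹) ≠ 0 := by
      apply mul_ne_zero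
      · simp only [ne_eq, ENNReal.ofReal_eq_zero, not_le]
        have hK' : (0 : ℝ) < (K : ℝ) := by exact_mod_cast hKpos
        positivity
      · simp [ENNReal.inv_ne_zero, ENNReal.ofReal_ne_top]
    have hbound : ∀ n ∈ ({n | n ∈ Good ∧ ∀ ed ∈ EF n, (r : ℝ) < U ed a}
        \ {n | n < G.dist 1 v}),
        ENNReal.ofReal (1 / K) * (ENNReal.ofReal c)⁻¹ ≤ ∑ q ∈ DF n, g q := by
      rintro n ⟨⟨hnG, hnC⟩, hnv⟩
      simp only [Set.mem_setOf_eq, not_lt] at hnv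
      have hflowsum : ∑ q ∈ DF n, θ q.1 q.2 = 1 := hcut v θ hθ n hnv
      have hclosed : ∀ q ∈ DF n, cc q.1 q.2 = c2 q.1 q.2 := by
        intro q hq
        have hed : s(q.1, q.2) ∈ EF n := Finset.mem_image.mpr ⟨q, hq, rfl⟩
        have := hnC _ hed
        rw [hccdef]
        simp only [dCond]
        rw [if_neg (by push_neg; linarith [hr1, this])]
      have hcard : (DF n).card ≤ K := hDFcard n hnG
      have hsq : (1 : ℝ) ≤ (DF n).card * ∑ q ∈ DF n, (θ q.1 q.2) ^ 2 := by
        have := sq_sum_le_card_mul_sum_sq (s := DF n) (f := fun q => θ q.1 q.2)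
        rw [hflowsum] at this
        simpa using this
      have hsum_sq : (1 : ℝ) / K ≤ ∑ q ∈ DF n, (θ q.1 q.2) ^ 2 := by
        rw [div_le_iff₀ (by positivity : (0:ℝ) < (K:ℝ))]
        have hKc : ((DF n).card : ℝ) ≤ (K : ℝ) := by exact_mod_cast hcard
        have hnn : (0 : ℝ) ≤ ∑ q ∈ DF n, (θ q.1 q.2) ^ 2 :=
          Finset.sum_nonneg fun q _ => sq_nonneg _
        calc (1 : ℝ) ≤ (DF n).card * ∑ q ∈ DF n, (θ q.1 q.2) ^ 2 := hsq
          _ ≤ K * ∑ q ∈ DF n, (θ q.1 q.2) ^ 2 := by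
              apply mul_le_mul_of_nonneg_right hKc hnn
          _ = (∑ q ∈ DF n, (θ q.1 q.2) ^ 2) * K := by ring
      calc ENNReal.ofReal (1 / K) * (ENNReal.ofReal c)⁻¹
          ≤ ENNReal.ofReal (∑ q ∈ DF n, (θ q.1 q.2) ^ 2) * (ENNReal.ofReal c)⁻¹ := by
            apply mul_le_mul_left
            exact ENNReal.ofReal_le_ofReal hsum_sq
        _ = (∑ q ∈ DF n, ENNReal.ofReal ((θ q.1 q.2) ^ 2)) * (ENNReal.ofReal c)⁻¹ := by
            rw [ENNReal.ofReal_sum_of_nonneg (fun q _ => sq_nonneg _)]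
        _ = ∑ q ∈ DF n, ENNReal.ofReal ((θ q.1 q.2) ^ 2) * (ENNReal.ofReal c)⁻¹ :=
            Finset.sum_mul _ _ _
        _ ≤ ∑ q ∈ DF n, g q := by
            apply Finset.sum_le_sum
            intro q hq
            have heq : ENNReal.ofReal ((θ q.1 q.2) ^ 2) * (ENNReal.ofReal c)⁻¹
                = ENNReal.ofReal ((θ q.1 q.2) ^ 2) / ENNReal.ofReal c :=
              (div_eq_mul_inv _ _).symm
            rw [heq, hgdef]
            simp only
            rw [hclosed q hq]
            exact ENNReal.div_le_div_left (ENNReal.ofReal_le_ofReal (hc2bdd q.1 q.2)) _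
    have := tsum_eq_top_of_infinite_finsets g DF _ hI hDFdisj hδ0 hbound
    exact this
  refine ⟨hmain, ?_⟩
  have h1mem : (1 : ℝ) ∈ {p : ℝ | p ∈ Set.Icc (0 : ℝ) 1 ∧
      ∀ᵐ a ∂P, ∀ q : ℝ, 0 ≤ q → q < p →
        NetRecurrent G (dCond c1 c2 (fun e => U e a) q)} := by
    refine ⟨⟨zero_le_one, le_refl 1⟩, ?_⟩
    filter_upwards [hmain] with a ha
    intro q hq0 hq1
    exact ha q hq0 hq1
  apply le_antisymm
  · apply csSup_le ⟨1, h1mem⟩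
    intro p hp
    exact hp.1.2
  · exact le_csSup ⟨1, fun p hp => hp.1.2⟩ h1mem


end
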